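/- arXiv:1012.5256 — 3 statements merged into one kernel-verified Lean document; each statement's English description precedes it below -/
import Mathlib

section
/- Every symmetric unitary complex N×N matrix S (i.e. S = Sᵀ and S*S = 1) can be written as S = Tᵀ T for some unitary matrix T. -/
open Matrix
open scoped Matrix.Norms.L2Operator

noncomputable instance matrixCStarAlgebra {n : Type*} [Fintype n] [DecidableEq n] :
    CStarAlgebra (Matrix n n ℂ) :=
  { Matrix.instL2OpNormedRing, Matrix.instL2OpNormedAlgebra, Matrix.instCStarRing,
    (inferInstance : StarRing (Matrix n n ℂ)),
    (inferInstance : CompleteSpace (Matrix n n ℂ)),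
    (inferInstance : StarModule ℂ (Matrix n n ℂ)) with }

/-- Every symmetric unitary complex `N × N` matrix `S` (i.e. `S = Sᵀ` and `S` unitary)
can be written as `S = Tᵀ * T` for some unitary matrix `T`. -/
theorem symmetric_unitary_factorization (N : ℕ) (S : Matrix (Fin N) (Fin N) ℂ)
    (hsym : Sᵀ = S) (hu : Sᴴ * S = 1) (hu' : S * Sᴴ = 1) :
    ∃ T : Matrix (Fin N) (Fin N) ℂ,
      Tᴴ * T = 1 ∧ T * Tᴴ = 1 ∧ S = Tᵀ * T := by
  classical
  have hSu : S ∈ unitary (Matrix (Fin N) (Fin N) ℂ) :=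
    Unitary.mem_iff.mpr ⟨by simpa [Matrix.star_eq_conjTranspose] using hu,
      by simpa [Matrix.star_eq_conjTranspose] using hu'⟩
  have hnormal : IsStarNormal S := ⟨by
    show star S * S = S * star S
    rw [Matrix.star_eq_conjTranspose, hu, hu']⟩
  have hfin : (spectrum ℂ S).Finite := Matrix.finite_spectrum S
  have hcont : ∀ g : ℂ → ℂ, ContinuousOn g (spectrum ℂ S) := fun g => hfin.continuousOn g
  have hspec : ∀ z ∈ spectrum ℂ S, ‖z‖ = 1 := fun z hz => by
    simpa using spectrum.subset_circle_of_unitary hSu hz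
  set f : ℂ → ℂ := fun z => z ^ (1/2 : ℂ) with hfdef
  -- key properties of f on the spectrum
  have hf2 : ∀ z ∈ spectrum ℂ S, f z * f z = z := by
    intro z hz
    have hz0 : z ≠ 0 := by
      intro h; have := hspec z hz; rw [h] at this; simp at this
    simp only [hfdef]
    rw [← Complex.cpow_add _ _ hz0]
    norm_num
  have hfabs : ∀ z ∈ spectrum ℂ S, star (f z) * f z = 1 := by
    intro z hz
    have hz0 : z ≠ 0 := by
      intro h; have := hspec z hz; rw [h] at this; simp at this
    have habs : ‖f z‖ = 1 := by
      simp only [hfdef]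
      rw [Complex.norm_cpow_of_ne_zero hz0]
      have : ‖z‖ = 1 := by simpa using hspec z hz
      simp [this]
    calc star (f z) * f z = ((Complex.normSq (f z) : ℝ) : ℂ) :=
            (Complex.normSq_eq_conj_mul_self (z := f z)).symm
      _ = 1 := by rw [Complex.normSq_eq_norm_sq, habs]; norm_num
  -- the square root via continuous functional calculus
  set R : Matrix (Fin N) (Fin N) ℂ := cfc f S with hRdef
  have hR2 : R * R = S := by
    rw [hRdef, ← cfc_mul f f S (hcont f) (hcont f), cfc_congr hf2, cfc_id' ℂ S]
  have hRnormal : IsStarNormal R := hRdef ▸ cfc_predicate f S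
  have hRu : star R * R = 1 := by
    rw [hRdef, ← cfc_star f S, ← cfc_mul _ f S (hcont _) (hcont f),
      cfc_congr hfabs, cfc_const_one ℂ S]
  have hRu' : R * star R = 1 := by
    rw [← hRnormal.star_comm_self.eq]
    exact hRu
  -- symmetry of R via uniqueness of the continuous functional calculus
  let ψ : Matrix (Fin N) (Fin N) ℂ →ₗ[ℂ] Matrix (Fin N) (Fin N) ℂ :=
    { toFun := Matrix.transpose
      map_add' := fun A B => Matrix.transpose_add A B
      map_smul' := fun c A => Matrix.transpose_smul c A }
  have hψcont : Continuous ψ := ψ.continuous_of_finiteDimensional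
  let φ : C(spectrum ℂ S, ℂ) →⋆ₐ[ℂ] Matrix (Fin N) (Fin N) ℂ :=
    { toFun := fun g => (cfcHom hnormal g)ᵀ
      map_one' := by simp
      map_mul' := fun g h => by
        have hcomm : cfcHom hnormal h * cfcHom hnormal g
            = cfcHom hnormal g * cfcHom hnormal h := by
          rw [← _root_.map_mul, ← _root_.map_mul, mul_comm]
        show (cfcHom hnormal (g * h))ᵀ = (cfcHom hnormal g)ᵀ * (cfcHom hnormal h)ᵀ
        rw [_root_.map_mul, ← Matrix.transpose_mul, hcomm]
      map_zero' := by simp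
      map_add' := fun g h => by
        show (cfcHom hnormal (g + h))ᵀ = (cfcHom hnormal g)ᵀ + (cfcHom hnormal h)ᵀ
        rw [_root_.map_add, Matrix.transpose_add]
      commutes' := fun c => by
        show (cfcHom hnormal (algebraMap ℂ _ c))ᵀ = algebraMap ℂ _ c
        rw [AlgHomClass.commutes]
        simp [Algebra.algebraMap_eq_smul_one]
      map_star' := fun g => by
        show (cfcHom hnormal (star g))ᵀ = star (cfcHom hnormal g)ᵀ
        rw [map_star]
        ext i j
        simp [Matrix.star_eq_conjTranspose, Matrix.conjTranspose_apply,
          Matrix.transpose_apply] }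
  have hkey : cfcHom hnormal = φ := by
    refine cfcHom_eq_of_continuous_of_map_id hnormal φ ?_ ?_
    · exact hψcont.comp (cfcHom_continuous hnormal)
    · show (cfcHom hnormal _)ᵀ = S
      rw [cfcHom_id hnormal, hsym]
  have hRsym : Rᵀ = R := by
    rw [hRdef, cfc_apply f S hnormal (hcont f)]
    exact (DFunLike.congr_fun hkey ⟨_, (hcont f).restrict⟩).symm
  refine ⟨R, ?_, ?_, ?_⟩
  · rw [← Matrix.star_eq_conjTranspose]; exact hRu
  · rw [← Matrix.star_eq_conjTranspose]; exact hRu'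
  · rw [hRsym]; exact hR2.symm
end

section
/- Every skew-symmetric unitary complex N×N matrix S with N even can be written as S = Tᵀ J T for some unitary matrix T, where J is the standard symplectic form matrix J = [[0, -1_{N/2}],[1_{N/2}, 0]] (in block form). -/
open Matrix

namespace SkewFact

variable {n : ℕ}

/-- Hermitian inner product on `Fin n ⊕ Fin n → ℂ`. -/
noncomputable def ip (x y : (Fin n ⊕ Fin n) → ℂ) : ℂ := star x ⬝ᵥ y

lemma ip_conj (x y : (Fin n ⊕ Fin n) → ℂ) : ip x y = star (ip y x) := by
  simp [ip, dotProduct, Finset.sum_comm, mul_comm]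

lemma ip_skew {S : Matrix (Fin n ⊕ Fin n) (Fin n ⊕ Fin n) ℂ} (hskew : Sᵀ = -S)
    (x y : (Fin n ⊕ Fin n) → ℂ) :
    ip x (S *ᵥ star y) = - ip y (S *ᵥ star x) := by
  have h : star x ᵥ* S = -(S *ᵥ star x) := by
    rw [← mulVec_transpose, hskew, neg_mulVec]
  rw [ip, ip, dotProduct_mulVec, h, neg_dotProduct, dotProduct_comm]

lemma ip_unit {S : Matrix (Fin n ⊕ Fin n) (Fin n ⊕ Fin n) ℂ} (hu : Sᴴ * S = 1)
    (x y : (Fin n ⊕ Fin n) → ℂ) :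
    ip (S *ᵥ star x) (S *ᵥ star y) = ip y x := by
  rw [ip, star_mulVec, star_star, dotProduct_mulVec, vecMul_vecMul, hu]
  simp [ip, dotProduct, mul_comm]

lemma invol {S : Matrix (Fin n ⊕ Fin n) (Fin n ⊕ Fin n) ℂ} (hskew : Sᵀ = -S)
    (hu' : S * Sᴴ = 1) (x : (Fin n ⊕ Fin n) → ℂ) :
    S *ᵥ star (S *ᵥ star x) = -x := by
  have hmap : Sᴴᵀ = -Sᴴ := by
    have : Sᴴᵀ = Sᵀᴴ := by ext a b; simp [conjTranspose_apply]
    rw [this, hskew, conjTranspose_neg]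
  rw [star_mulVec, star_star, ← mulVec_transpose, mulVec_mulVec, hmap]
  simp [hu', neg_mulVec]


lemma exists_family (S : Matrix (Fin n ⊕ Fin n) (Fin n ⊕ Fin n) ℂ)
    (hskew : Sᵀ = -S) (hu : Sᴴ * S = 1) (hu' : S * Sᴴ = 1) :
    ∀ k, k ≤ n → ∃ e : Fin k → ((Fin n ⊕ Fin n) → ℂ),
      (∀ i j, ip (e i) (e j) = if i = j then 1 else 0) ∧
      (∀ i j, ip (e i) (S *ᵥ star (e j)) = 0) := by
  intro k
  induction k with
  | zero => exact fun _ => ⟨Fin.elim0, fun i => i.elim0, fun i => i.elim0⟩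
  | succ k ih =>
    intro hk
    have hkn : k < n := Nat.lt_of_succ_le hk
    obtain ⟨e, he1, he2⟩ := ih (Nat.le_of_succ_le hk)
    set f : Fin k → ((Fin n ⊕ Fin n) → ℂ) := fun i => S *ᵥ star (e i) with hf
    set M : Matrix (Fin k ⊕ Fin k) (Fin n ⊕ Fin n) ℂ :=
      Matrix.of (fun j a => star (Sum.elim e f j a)) with hM
    -- the kernel of M is nontrivial
    have hnotinj : ¬ Function.Injective M.mulVecLin := by
      intro h
      have hle := LinearMap.finrank_le_finrank_of_injective h
      simp only [Module.finrank_fintype_fun_eq_card, Fintype.card_sum,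
        Fintype.card_fin] at hle
      omega
    rw [Function.not_injective_iff] at hnotinj
    obtain ⟨a, b, hab, hne⟩ := hnotinj
    set v : (Fin n ⊕ Fin n) → ℂ := a - b with hv
    have hv0 : v ≠ 0 := sub_ne_zero.mpr hne
    have hvker : M *ᵥ v = 0 := by
      have : M.mulVecLin (a - b) = 0 := by rw [map_sub, hab, sub_self]
      simpa [Matrix.mulVecLin_apply] using this
    have hve : ∀ i, ip (e i) v = 0 := by
      intro i
      have := congrFun hvker (Sum.inl i)
      simpa [hM, Matrix.mulVec, ip, dotProduct] using this
    have hvf : ∀ i, ip (f i) v = 0 := by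
      intro i
      have := congrFun hvker (Sum.inr i)
      simpa [hM, Matrix.mulVec, ip, dotProduct] using this
    -- normalize v
    set r : ℝ := ∑ c, Complex.normSq (v c) with hr
    have hrpos : 0 < r := by
      obtain ⟨c, hc⟩ := Function.ne_iff.mp hv0
      exact Finset.sum_pos' (fun c _ => Complex.normSq_nonneg _)
        ⟨c, Finset.mem_univ c, by simpa [Complex.normSq_pos] using hc⟩
    set u : (Fin n ⊕ Fin n) → ℂ := fun c => ((Real.sqrt r)⁻¹ : ℂ) * v c with hu2
    have hvv : ip v v = (r : ℂ) := by
      simp [ip, dotProduct, hr, Complex.normSq_eq_conj_mul_self]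
    have huu : ip u u = 1 := by
      have : ip u u = ((Real.sqrt r)⁻¹ : ℂ) * ((Real.sqrt r)⁻¹ : ℂ) * ip v v := by
        simp only [ip, dotProduct, hu2, Finset.mul_sum, Pi.star_apply]
        refine Finset.sum_congr rfl fun c _ => ?_
        simp only [star_mul', star_inv₀, Complex.star_def, Complex.conj_ofReal]
        ring
      rw [this, hvv]
      have hs : ((Real.sqrt r : ℂ))⁻¹ * ((Real.sqrt r : ℂ))⁻¹ * (r : ℂ)
          = (( (Real.sqrt r)⁻¹ * (Real.sqrt r)⁻¹ * r : ℝ) : ℂ) := by push_cast; ring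
      have : (Real.sqrt r)⁻¹ * (Real.sqrt r)⁻¹ * r = 1 := by
        rw [← Real.sqrt_mul_self hrpos.le]
        field_simp
        rw [Real.sq_sqrt (Real.sqrt_nonneg _)]
      rw [hs, this]; norm_num
    have hipu : ∀ x, ip x u = ((Real.sqrt r)⁻¹ : ℂ) * ip x v := by
      intro x
      simp only [ip, dotProduct, hu2, Finset.mul_sum, Pi.star_apply]
      exact Finset.sum_congr rfl fun c _ => by ring
    have heu : ∀ i, ip (e i) u = 0 := fun i => by rw [hipu, hve, mul_zero]
    have hfu : ∀ i, ip (f i) u = 0 := fun i => by rw [hipu, hvf, mul_zero]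
    have hue : ∀ i, ip u (e i) = 0 := fun i => by rw [ip_conj, heu, star_zero]
    have huf : ∀ i, ip u (f i) = 0 := fun i => by rw [ip_conj, hfu, star_zero]
    have huSu : ip u (S *ᵥ star u) = 0 := by
      have := ip_skew hskew u u
      linear_combination this / 2
    refine ⟨Fin.snoc e u, ?_, ?_⟩
    · intro i j
      refine Fin.lastCases ?_ ?_ i
      · refine Fin.lastCases ?_ ?_ j
        · simpa using huu
        · intro j'
          simp only [Fin.snoc_last, Fin.snoc_castSucc]
          rw [hue]
          simp [(Fin.castSucc_lt_last j').ne']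
      · intro i'
        refine Fin.lastCases ?_ ?_ j
        · simp only [Fin.snoc_last, Fin.snoc_castSucc]
          rw [heu]
          simp [(Fin.castSucc_lt_last i').ne]
        · intro j'
          simp only [Fin.snoc_castSucc]
          rw [he1]
          simp [Fin.castSucc_inj]
    · intro i j
      refine Fin.lastCases ?_ ?_ i
      · refine Fin.lastCases ?_ ?_ j
        · simpa using huSu
        · intro j'
          simp only [Fin.snoc_last, Fin.snoc_castSucc]
          exact huf j'
      · intro i'
        refine Fin.lastCases ?_ ?_ j
        · simp only [Fin.snoc_last, Fin.snoc_castSucc]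
          rw [ip_skew hskew]
          show -ip u (f i') = 0
          rw [huf, neg_zero]
        · intro j'
          simp only [Fin.snoc_castSucc]
          exact he2 i' j'

end SkewFact

open SkewFact in
/-- Every skew-symmetric unitary complex `N × N` matrix `S` with `N` even can be written as
`S = Tᵀ * J * T` for some unitary matrix `T`, where `J = [[0, -1],[1, 0]]` in block form. -/
theorem skew_symmetric_unitary_factorization (n : ℕ)
    (S : Matrix (Fin n ⊕ Fin n) (Fin n ⊕ Fin n) ℂ)
    (hskew : Sᵀ = -S) (hu : Sᴴ * S = 1) (hu' : S * Sᴴ = 1) :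
    ∃ T : Matrix (Fin n ⊕ Fin n) (Fin n ⊕ Fin n) ℂ,
      Tᴴ * T = 1 ∧ T * Tᴴ = 1 ∧
      S = Tᵀ * Matrix.fromBlocks (0 : Matrix (Fin n) (Fin n) ℂ) (-1) 1 0 * T := by
  obtain ⟨e, he1, he2⟩ := SkewFact.exists_family S hskew hu hu' n le_rfl
  set f : Fin n → ((Fin n ⊕ Fin n) → ℂ) := fun i => S *ᵥ star (e i) with hf
  set g : Fin n ⊕ Fin n → ((Fin n ⊕ Fin n) → ℂ) := Sum.elim e f with hg
  set T : Matrix (Fin n ⊕ Fin n) (Fin n ⊕ Fin n) ℂ := Matrix.of (fun k a => g k a) with hT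
  have hef : ∀ i j, ip (e i) (f j) = 0 := he2
  have hfe : ∀ i j, ip (f i) (e j) = 0 := fun i j => by
    rw [ip_conj, hef, star_zero]
  have hff : ∀ i j, ip (f i) (f j) = if i = j then 1 else 0 := fun i j => by
    have h := ip_unit hu (e i) (e j)
    show ip (S *ᵥ star (e i)) (S *ᵥ star (e j)) = _
    rw [h, he1]
    simp [eq_comm]
  have hSf : ∀ j, S *ᵥ star (f j) = -(e j) := fun j => invol hskew hu' (e j)
  have hipneg : ∀ (x y : (Fin n ⊕ Fin n) → ℂ), ip x (-y) = -ip x y := fun x y => by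
    simp [ip]
  have hrow : ∀ k l, ip (g k) (g l) = if k = l then 1 else 0 := by
    rintro (i | i) (j | j)
    · rw [show g (Sum.inl i) = e i from rfl, show g (Sum.inl j) = e j from rfl, he1]
      simp
    · rw [show g (Sum.inl i) = e i from rfl, show g (Sum.inr j) = f j from rfl, hef]
      simp
    · rw [show g (Sum.inr i) = f i from rfl, show g (Sum.inl j) = e j from rfl, hfe]
      simp
    · rw [show g (Sum.inr i) = f i from rfl, show g (Sum.inr j) = f j from rfl, hff]
      simp
  have hTT' : T * Tᴴ = 1 := by
    ext k l
    have h1 : (T * Tᴴ) k l = ip (g l) (g k) := by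
      simp [Matrix.mul_apply, Matrix.conjTranspose_apply, ip, dotProduct, hT,
        mul_comm]
    rw [h1, hrow, Matrix.one_apply]
    simp [eq_comm]
  have hTT : Tᴴ * T = 1 := mul_eq_one_comm.mp hTT'
  have hrowS : ∀ k l, ip (g k) (S *ᵥ star (g l))
      = Matrix.fromBlocks (0 : Matrix (Fin n) (Fin n) ℂ) (-1) 1 0 k l := by
    rintro (i | i) (j | j)
    · rw [show g (Sum.inl i) = e i from rfl]
      rw [show S *ᵥ star (g (Sum.inl j)) = f j from rfl, hef]
      simp [Matrix.fromBlocks]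
    · rw [show g (Sum.inl i) = e i from rfl,
        show star (g (Sum.inr j)) = star (f j) from rfl, hSf, hipneg, he1]
      simp [Matrix.fromBlocks, Matrix.one_apply]
    · rw [show g (Sum.inr i) = f i from rfl,
        show S *ᵥ star (g (Sum.inl j)) = f j from rfl, hff]
      simp [Matrix.fromBlocks, Matrix.one_apply]
    · rw [show g (Sum.inr i) = f i from rfl,
        show star (g (Sum.inr j)) = star (f j) from rfl, hSf, hipneg, hfe]
      simp [Matrix.fromBlocks]
  have hJ : Tᴴᵀ * (S * Tᴴ) = Matrix.fromBlocks (0 : Matrix (Fin n) (Fin n) ℂ) (-1) 1 0 := by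
    ext k l
    rw [← hrowS k l]
    simp [Matrix.mul_apply, Matrix.conjTranspose_apply, Matrix.transpose_apply, ip,
      Matrix.mulVec, dotProduct, hT, Finset.mul_sum, mul_comm, mul_left_comm]
  have h2 : Tᵀ * Tᴴᵀ = 1 := by
    rw [← Matrix.transpose_mul, hTT, Matrix.transpose_one]
  refine ⟨T, hTT, hTT', ?_⟩
  rw [← hJ]
  rw [show Tᵀ * (Tᴴᵀ * (S * Tᴴ)) * T = Tᵀ * Tᴴᵀ * S * (Tᴴ * T) by
    simp only [Matrix.mul_assoc]]
  rw [h2, hTT, Matrix.one_mul, Matrix.mul_one]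
end

section
/- Let Φ be the identity (standard) representation of su(N) on ℂ^N and k ⊆ su(N) a Lie subalgebra. Then k = su(N) if and only if the commutant of {A ⊗ 1_N + 1_N ⊗ A : A ∈ k} in M_{N²}(ℂ) has dimension exactly 2. -/
open Matrix Kronecker

attribute [local instance 100] LieRing.ofAssociativeRing

variable {N : ℕ}

def Kmat (N : ℕ) : Matrix (Fin N × Fin N) (Fin N × Fin N) ℂ :=
  Matrix.of fun a b => if a.1 = b.2 ∧ a.2 = b.1 then 1 else 0

theorem Kmat_mul_kron (A B : Matrix (Fin N) (Fin N) ℂ) :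
    Kmat N * (A ⊗ₖ B) = (B ⊗ₖ A) * Kmat N := by
  ext ⟨a, b⟩ ⟨c, d⟩
  simp only [Matrix.mul_apply, Kmat, Matrix.of_apply, Matrix.kroneckerMap_apply,
    Fintype.sum_prod_type, ite_mul, one_mul, zero_mul, mul_ite, mul_one, mul_zero]
  simp only [ite_and, Finset.sum_ite_eq, Finset.sum_ite_eq', Finset.mem_univ, if_true]
  rw [Finset.sum_comm]
  simp [Finset.sum_ite_eq', mul_comm]

noncomputable def tensorCommutant (N : ℕ) (s : Set (Matrix (Fin N) (Fin N) ℂ)) :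
    Submodule ℂ (Matrix (Fin N × Fin N) (Fin N × Fin N) ℂ) where
  carrier := {g | ∀ A ∈ s,
    g * (A ⊗ₖ (1 : Matrix (Fin N) (Fin N) ℂ) + (1 : Matrix (Fin N) (Fin N) ℂ) ⊗ₖ A)
      = (A ⊗ₖ (1 : Matrix (Fin N) (Fin N) ℂ) + (1 : Matrix (Fin N) (Fin N) ℂ) ⊗ₖ A) * g}
  add_mem' := by
    intro a b ha hb A hA
    rw [add_mul, ha A hA, hb A hA, ← mul_add]
  zero_mem' := by
    intro A hA
    simp
  smul_mem' := by
    intro c x hx A hA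
    rw [smul_mul_assoc, mul_smul_comm, hx A hA]

theorem one_mem_tc (s : Set (Matrix (Fin N) (Fin N) ℂ)) : (1 : Matrix (Fin N × Fin N) (Fin N × Fin N) ℂ) ∈ tensorCommutant N s := by
  intro A hA; rw [one_mul, mul_one]

theorem Kmat_mem_tc (s : Set (Matrix (Fin N) (Fin N) ℂ)) : Kmat N ∈ tensorCommutant N s := by
  intro A hA
  rw [mul_add, add_mul, Kmat_mul_kron, Kmat_mul_kron]
  abel

theorem span_le_tc (s : Set (Matrix (Fin N) (Fin N) ℂ)) :
    Submodule.span ℂ {(1 : Matrix (Fin N × Fin N) (Fin N × Fin N) ℂ), Kmat N} ≤ tensorCommutant N s := by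
  rw [Submodule.span_le]
  rintro x (rfl | rfl)
  · exact one_mem_tc s
  · exact Kmat_mem_tc s

theorem li_one_Kmat (hN : 2 ≤ N) :
    LinearIndependent ℂ ![(1 : Matrix (Fin N × Fin N) (Fin N × Fin N) ℂ), Kmat N] := by
  have h01 : (⟨0, by omega⟩ : Fin N) ≠ ⟨1, by omega⟩ := by simp [Fin.ext_iff]
  rw [LinearIndependent.pair_iff]
  intro a b hab
  constructor
  · have := congrFun (congrFun hab (⟨0, by omega⟩, ⟨1, by omega⟩)) (⟨0, by omega⟩, ⟨1, by omega⟩)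
    simpa [Kmat, Matrix.one_apply, h01] using this
  · have := congrFun (congrFun hab (⟨0, by omega⟩, ⟨1, by omega⟩)) (⟨1, by omega⟩, ⟨0, by omega⟩)
    simpa [Kmat, Matrix.one_apply, Prod.ext_iff, h01] using this

theorem finrank_span_one_Kmat (hN : 2 ≤ N) :
    Module.finrank ℂ ↥(Submodule.span ℂ {(1 : Matrix (Fin N × Fin N) (Fin N × Fin N) ℂ), Kmat N}) = 2 := by
  have h : ({(1 : Matrix (Fin N × Fin N) (Fin N × Fin N) ℂ), Kmat N} : Set _) = Set.range ![(1 : Matrix (Fin N × Fin N) (Fin N × Fin N) ℂ), Kmat N] := by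
    simp [Matrix.range_cons, Matrix.range_empty]
    exact Set.pair_comm _ _
  rw [h, finrank_span_eq_card (li_one_Kmat hN)]
  simp

abbrev SM (A : Matrix (Fin N) (Fin N) ℂ) : Matrix (Fin N × Fin N) (Fin N × Fin N) ℂ :=
  A ⊗ₖ (1 : Matrix (Fin N) (Fin N) ℂ) + (1 : Matrix (Fin N) (Fin N) ℂ) ⊗ₖ A

theorem SM_add (A B : Matrix (Fin N) (Fin N) ℂ) : SM (A + B) = SM A + SM B := by
  simp [SM, Matrix.add_kronecker, Matrix.kronecker_add]; abel

theorem SM_smul (c : ℂ) (A : Matrix (Fin N) (Fin N) ℂ) : SM (c • A) = c • SM A := by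
  simp [SM, Matrix.smul_kronecker, Matrix.kronecker_smul]

theorem SM_mul (A B : Matrix (Fin N) (Fin N) ℂ) :
    SM A * SM B = SM (A * B) + (A ⊗ₖ B + B ⊗ₖ A) := by
  simp only [SM, add_mul, mul_add, ← Matrix.mul_kronecker_mul, Matrix.one_mul, Matrix.mul_one]
  abel

theorem comm_all (hN : 2 ≤ N) (g : Matrix (Fin N × Fin N) (Fin N × Fin N) ℂ)
    (hg : ∀ A : Matrix (Fin N) (Fin N) ℂ, Aᴴ = -A ∧ A.trace = 0 → Commute g (SM A)) :
    ∀ A : Matrix (Fin N) (Fin N) ℂ, Commute g (SM A) := by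
  intro A
  have hNz : (N : ℂ) ≠ 0 := by
    simp only [ne_eq, Nat.cast_eq_zero]; omega
  set t : ℂ := A.trace / N with ht
  set A₀ : Matrix (Fin N) (Fin N) ℂ := A - t • 1 with hA₀
  have htr : A₀.trace = 0 := by
    simp [hA₀, Matrix.trace_sub, Matrix.trace_smul, Matrix.trace_one, ht]
    field_simp
    ring
  have htrH : (A₀ᴴ).trace = 0 := by rw [Matrix.trace_conjTranspose, htr]; simp
  set B₁ : Matrix (Fin N) (Fin N) ℂ := (2⁻¹ : ℂ) • (A₀ - A₀ᴴ) with hB₁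
  set B₂ : Matrix (Fin N) (Fin N) ℂ := (-(Complex.I)/2) • (A₀ + A₀ᴴ) with hB₂
  have h1 : Commute g (SM B₁) := by
    refine hg B₁ ⟨?_, ?_⟩
    · rw [hB₁, Matrix.conjTranspose_smul, Matrix.conjTranspose_sub, Matrix.conjTranspose_conjTranspose]
      rw [show star (2⁻¹ : ℂ) = 2⁻¹ by norm_num,
        show A₀ᴴ - A₀ = -(A₀ - A₀ᴴ) from (neg_sub _ _).symm, smul_neg]
    · simp [hB₁, Matrix.trace_smul, Matrix.trace_sub, htr, htrH]
  have h2 : Commute g (SM B₂) := by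
    refine hg B₂ ⟨?_, ?_⟩
    · rw [hB₂, Matrix.conjTranspose_smul, Matrix.conjTranspose_add, Matrix.conjTranspose_conjTranspose]
      rw [show star (-Complex.I/2 : ℂ) = -(-Complex.I/2) by rw [neg_div, star_neg, star_div₀, Complex.star_def, Complex.conj_I, map_ofNat]; ring,
        add_comm A₀ᴴ A₀, neg_smul]
    · simp [hB₂, Matrix.trace_smul, Matrix.trace_add, htr, htrH]
  have hsum : A = B₁ + Complex.I • B₂ + t • 1 := by
    have hI : Complex.I * (-Complex.I / 2) = (2⁻¹ : ℂ) := by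
      field_simp
      simp [Complex.I_sq]
    rw [hB₁, hB₂, smul_smul, hI, ← smul_add,
      show A₀ - A₀ᴴ + (A₀ + A₀ᴴ) = (2 : ℂ) • A₀ by rw [two_smul]; abel,
      smul_smul, show (2⁻¹ * 2 : ℂ) = 1 by norm_num, one_smul, hA₀]
    abel
  calc g * SM A = g * (SM B₁ + Complex.I • SM B₂ + t • (SM 1)) := by
        rw [← SM_smul, ← SM_smul, ← SM_add, ← SM_add, ← hsum]
    _ = (SM B₁ + Complex.I • SM B₂ + t • (SM 1)) * g := by
        have h3 : Commute g (SM (1 : Matrix (Fin N) (Fin N) ℂ)) := by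
          simp only [SM, Matrix.one_kronecker_one]
          exact (Commute.one_right g).add_right (Commute.one_right g)
        exact ((h1.add_right ((h2.smul_right Complex.I))).add_right (h3.smul_right t))
    _ = SM A * g := by rw [← SM_smul, ← SM_smul, ← SM_add, ← SM_add, ← hsum]

theorem comm_sym (g : Matrix (Fin N × Fin N) (Fin N × Fin N) ℂ)
    (hg : ∀ A : Matrix (Fin N) (Fin N) ℂ, Commute g (SM A))
    (A B : Matrix (Fin N) (Fin N) ℂ) : Commute g (A ⊗ₖ B + B ⊗ₖ A) := by
  have h := ((hg A).mul_right (hg B)).sub_right (hg (A * B))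
  have e : SM A * SM B - SM (A * B) = A ⊗ₖ B + B ⊗ₖ A := by
    rw [SM_mul]; abel
  rwa [e] at h

theorem tc_structure (hN : 2 ≤ N) (g : Matrix (Fin N × Fin N) (Fin N × Fin N) ℂ)
    (hg : ∀ A : Matrix (Fin N) (Fin N) ℂ, Commute g (SM A)) :
    g = g (⟨0, by omega⟩, ⟨1, by omega⟩) (⟨0, by omega⟩, ⟨1, by omega⟩) • 1
      + g (⟨0, by omega⟩, ⟨1, by omega⟩) (⟨1, by omega⟩, ⟨0, by omega⟩) • Kmat N := by
  set z : Fin N := ⟨0, by omega⟩ with hz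
  set o : Fin N := ⟨1, by omega⟩ with ho
  have hzo : z ≠ o := by simp [hz, ho, Fin.ext_iff]
  ext ⟨y, w⟩ ⟨k, l⟩
  have hcomm := (comm_sym g hg (Matrix.single z y (1:ℂ)) (Matrix.single o w (1:ℂ))).eq
  have h1 := congrFun (congrFun hcomm (z, o)) (k, l)
  simp only [Matrix.mul_apply, Matrix.add_apply, Matrix.kroneckerMap_apply,
    Matrix.single, Matrix.of_apply, Fintype.sum_prod_type, ite_and,
    ite_mul, mul_ite, one_mul, mul_one, zero_mul, mul_zero,
    Finset.sum_ite_eq, Finset.sum_ite_eq', Finset.mem_univ, if_true, Finset.sum_ite_irrel,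
    Finset.sum_const_zero, hzo, hzo.symm, if_false, add_zero, zero_add] at h1
  simp only [mul_add, mul_ite, mul_one, mul_zero, Finset.sum_add_distrib,
    Finset.sum_ite_eq, Finset.sum_ite_irrel, Finset.sum_const_zero,
    Finset.mem_univ, if_true] at h1
  rw [Matrix.add_apply, Matrix.smul_apply, Matrix.smul_apply, Matrix.one_apply, smul_eq_mul,
    smul_eq_mul, ← h1, Kmat]
  simp only [Matrix.of_apply, Prod.ext_iff, ite_and, mul_ite, mul_one, mul_zero]
  split_ifs <;> simp_all

noncomputable def bf (p : Submodule ℝ (Matrix (Fin N) (Fin N) ℂ)) :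
    LinearMap.BilinForm ℝ ↥p :=
  LinearMap.mk₂ ℝ
    (fun X Y => -((((X : Matrix (Fin N) (Fin N) ℂ)) * (Y : Matrix (Fin N) (Fin N) ℂ)).trace.re))
    (fun m₁ m₂ n => by
      simp only [Submodule.coe_add, add_mul, Matrix.trace_add, Complex.add_re]; ring)
    (fun c m n => by
      simp only [SetLike.val_smul, smul_mul_assoc, Matrix.trace_smul, Complex.smul_re,
        smul_eq_mul]; ring)
    (fun m n₁ n₂ => by
      simp only [Submodule.coe_add, mul_add, Matrix.trace_add, Complex.add_re]; ring)
    (fun c m n => by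
      simp only [SetLike.val_smul, mul_smul_comm, Matrix.trace_smul, Complex.smul_re,
        smul_eq_mul]; ring)

theorem bf_apply (p : Submodule ℝ (Matrix (Fin N) (Fin N) ℂ)) (X Y : ↥p) :
    bf p X Y = -((((X : Matrix (Fin N) (Fin N) ℂ)) * (Y : Matrix (Fin N) (Fin N) ℂ)).trace.re) :=
  rfl

theorem bf_symm (p : Submodule ℝ (Matrix (Fin N) (Fin N) ℂ)) : (bf p).IsSymm := by
  refine LinearMap.BilinForm.isSymm_def.mpr ?_
  intro X Y
  rw [bf_apply, bf_apply, Matrix.trace_mul_comm]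

theorem bf_nondeg (p : Submodule ℝ (Matrix (Fin N) (Fin N) ℂ))
    (hskew : ∀ A ∈ p, Aᴴ = -A) : (bf p).Nondegenerate := by
  suffices hL : (bf p).SeparatingLeft from ⟨hL, fun Y hY => hL Y fun X => by rw [bf_apply, Matrix.trace_mul_comm, ← bf_apply]; exact hY X⟩
  intro X hX
  have h := hX X
  rw [bf_apply] at h
  have hXc : ((X : Matrix (Fin N) (Fin N) ℂ))ᴴ = -(X : Matrix (Fin N) (Fin N) ℂ) :=
    hskew _ X.2
  have hmm : ((X : Matrix (Fin N) (Fin N) ℂ) * (X : Matrix (Fin N) (Fin N) ℂ)).trace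
      = -((X : Matrix (Fin N) (Fin N) ℂ) * (X : Matrix (Fin N) (Fin N) ℂ)ᴴ).trace := by
    rw [hXc]; simp
  rw [hmm] at h
  simp only [neg_neg, Complex.neg_re] at h
  have htr : ((X : Matrix (Fin N) (Fin N) ℂ) * (X : Matrix (Fin N) (Fin N) ℂ)ᴴ).trace.re
      = ∑ i, ∑ j, Complex.normSq ((X : Matrix (Fin N) (Fin N) ℂ) i j) := by
    simp only [Matrix.trace, Matrix.diag, Matrix.mul_apply, Matrix.conjTranspose_apply,
      Complex.re_sum]
    congr 1; ext i; congr 1; ext j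
    simp [Complex.star_def, Complex.mul_conj]
  rw [htr] at h
  have hzero : ∀ i j, ((X : Matrix (Fin N) (Fin N) ℂ)) i j = 0 := by
    intro i j
    have hnn : ∀ i ∈ Finset.univ, (0:ℝ) ≤ ∑ j, Complex.normSq ((X : Matrix (Fin N) (Fin N) ℂ) i j) :=
      fun i _ => Finset.sum_nonneg fun j _ => Complex.normSq_nonneg _
    have h1 := (Finset.sum_eq_zero_iff_of_nonneg hnn).mp h i (Finset.mem_univ i)
    have h2 := (Finset.sum_eq_zero_iff_of_nonneg
      (fun j _ => Complex.normSq_nonneg ((X : Matrix (Fin N) (Fin N) ℂ) i j))).mp h1 j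
      (Finset.mem_univ j)
    exact Complex.normSq_eq_zero.mp h2
  apply Subtype.ext
  ext i j
  exact hzero i j

theorem sum_kron {ι : Type*} (s : Finset ι) (f : ι → Matrix (Fin N) (Fin N) ℂ)
    (B : Matrix (Fin N) (Fin N) ℂ) :
    (∑ i ∈ s, f i) ⊗ₖ B = ∑ i ∈ s, (f i ⊗ₖ B) := by
  ext ⟨a, b⟩ ⟨c, d⟩
  simp [Matrix.kroneckerMap_apply, Matrix.sum_apply, Finset.sum_mul]

theorem kron_sum {ι : Type*} (s : Finset ι) (A : Matrix (Fin N) (Fin N) ℂ)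
    (f : ι → Matrix (Fin N) (Fin N) ℂ) :
    A ⊗ₖ (∑ i ∈ s, f i) = ∑ i ∈ s, (A ⊗ₖ f i) := by
  ext ⟨a, b⟩ ⟨c, d⟩
  simp [Matrix.kroneckerMap_apply, Matrix.sum_apply, Finset.mul_sum]

/-- contraction map against X -/
noncomputable def phi (X : Matrix (Fin N) (Fin N) ℂ) :
    Matrix (Fin N × Fin N) (Fin N × Fin N) ℂ →ₗ[ℂ] Matrix (Fin N) (Fin N) ℂ where
  toFun M := Matrix.of fun p q => ∑ j, ∑ m, M (p, j) (q, m) * X m j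
  map_add' M M' := by
    ext p q
    simp [Matrix.add_apply, add_mul, Finset.sum_add_distrib]
  map_smul' c M := by
    ext p q
    simp [Matrix.smul_apply, smul_eq_mul, Finset.mul_sum, mul_assoc]

theorem phi_kron (X A B : Matrix (Fin N) (Fin N) ℂ) :
    phi X (A ⊗ₖ B) = (B * X).trace • A := by
  ext p q
  have htr : (B * X).trace = ∑ j, ∑ m, B j m * X m j := by
    simp [Matrix.trace, Matrix.diag, Matrix.mul_apply]
  simp only [phi, LinearMap.coe_mk, AddHom.coe_mk, Matrix.of_apply, Matrix.kroneckerMap_apply,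
    Matrix.smul_apply, smul_eq_mul, htr, Finset.sum_mul]
  refine Finset.sum_congr rfl fun j _ => ?_
  refine Finset.sum_congr rfl fun m _ => ?_
  ring

theorem phi_one (X : Matrix (Fin N) (Fin N) ℂ) :
    phi X (1 : Matrix (Fin N × Fin N) (Fin N × Fin N) ℂ) = X.trace • (1 : Matrix (Fin N) (Fin N) ℂ) := by
  ext p q
  simp only [phi, LinearMap.coe_mk, AddHom.coe_mk, Matrix.of_apply, Matrix.one_apply,
    Prod.mk.injEq, ite_and, ite_mul, one_mul, zero_mul, Matrix.smul_apply, smul_eq_mul,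
    Matrix.trace, Matrix.diag]
  by_cases hpq : p = q
  · simp [hpq, Finset.sum_ite_eq, Finset.sum_ite_irrel]
  · simp [hpq, Matrix.one_apply]

theorem phi_K (hN : 2 ≤ N) (X : Matrix (Fin N) (Fin N) ℂ) : phi X (Kmat N) = X := by
  ext p q
  simp only [phi, LinearMap.coe_mk, AddHom.coe_mk, Matrix.of_apply, Kmat, ite_and, ite_mul,
    one_mul, zero_mul]
  simp [Finset.sum_ite_eq, Finset.sum_ite_eq']

theorem real_trace_of_skew (X Y : Matrix (Fin N) (Fin N) ℂ) (hX : Xᴴ = -X) (hY : Yᴴ = -Y) :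
    ((X * Y).trace) = (((X * Y).trace.re : ℝ) : ℂ) := by
  have h : star ((X * Y).trace) = (X * Y).trace := by
    rw [← Matrix.trace_conjTranspose, Matrix.conjTranspose_mul, hX, hY, Matrix.neg_mul,
      Matrix.mul_neg, neg_neg, Matrix.trace_mul_comm]
  exact ((Complex.conj_eq_iff_re).mp h).symm

theorem sub_kron (A B C : Matrix (Fin N) (Fin N) ℂ) :
    (A - B) ⊗ₖ C = A ⊗ₖ C - B ⊗ₖ C := by
  ext ⟨a, b⟩ ⟨c, d⟩
  simp [Matrix.kroneckerMap_apply, Matrix.sub_apply, sub_mul]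

theorem kron_sub (A B C : Matrix (Fin N) (Fin N) ℂ) :
    A ⊗ₖ (B - C) = A ⊗ₖ B - A ⊗ₖ C := by
  ext ⟨a, b⟩ ⟨c, d⟩
  simp [Matrix.kroneckerMap_apply, Matrix.sub_apply, mul_sub]

theorem T_mem_tc (p : Submodule ℝ (Matrix (Fin N) (Fin N) ℂ))
    (hp : ∀ {X Y : Matrix (Fin N) (Fin N) ℂ}, X ∈ p → Y ∈ p → X * Y - Y * X ∈ p)
    {ι : Type*} [Fintype ι] [DecidableEq ι]
    (v C : Module.Basis ι ℝ ↥p)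
    (hdual : ∀ X : ↥p, (∑ i, bf p X (C i) • v i) = X)
    (A : Matrix (Fin N) (Fin N) ℂ) (hA : A ∈ p)
    (hdual' : ∀ X : ↥p, (∑ i, bf p X (v i) • C i) = X) :
    Commute (∑ i, (((v i : Matrix (Fin N) (Fin N) ℂ)) ⊗ₖ ((C i : Matrix (Fin N) (Fin N) ℂ))))
      (SM A) := by
  classical
  set D : ι → ↥p := fun i => ⟨(v i : Matrix (Fin N) (Fin N) ℂ) * A - A * (v i : Matrix (Fin N) (Fin N) ℂ), hp (v i).2 hA⟩ with hD
  set E : ι → ↥p := fun i => ⟨(C i : Matrix (Fin N) (Fin N) ℂ) * A - A * (C i : Matrix (Fin N) (Fin N) ℂ), hp (C i).2 hA⟩ with hE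
  have hcoef : ∀ i j : ι, bf p (D i) (C j) + bf p (E j) (v i) = 0 := by
    intro i j
    rw [bf_apply, bf_apply]
    have ht : (((D i : Matrix (Fin N) (Fin N) ℂ)) * (C j : Matrix (Fin N) (Fin N) ℂ)).trace
        + (((E j : Matrix (Fin N) (Fin N) ℂ)) * (v i : Matrix (Fin N) (Fin N) ℂ)).trace = 0 := by
      simp only [hD, hE]
      rw [Matrix.sub_mul, Matrix.sub_mul, Matrix.trace_sub, Matrix.trace_sub,
        Matrix.trace_mul_cycle A ((C j : Matrix (Fin N) (Fin N) ℂ)) ((v i : Matrix (Fin N) (Fin N) ℂ)),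
        Matrix.trace_mul_cycle A ((v i : Matrix (Fin N) (Fin N) ℂ)) ((C j : Matrix (Fin N) (Fin N) ℂ))]
      ring
    have h2 : (((D i : Matrix (Fin N) (Fin N) ℂ)) * (C j : Matrix (Fin N) (Fin N) ℂ)).trace.re
        + (((E j : Matrix (Fin N) (Fin N) ℂ)) * (v i : Matrix (Fin N) (Fin N) ℂ)).trace.re = 0 := by
      rw [← Complex.add_re, ht, Complex.zero_re]
    linarith
  have hDc : ∀ i, ((D i : Matrix (Fin N) (Fin N) ℂ))
      = ∑ j, bf p (D i) (C j) • ((v j : Matrix (Fin N) (Fin N) ℂ)) := by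
    intro i
    conv_lhs => rw [← hdual (D i)]
    push_cast
    rfl
  have hEc : ∀ i, ((E i : Matrix (Fin N) (Fin N) ℂ))
      = ∑ j, bf p (E i) (v j) • ((C j : Matrix (Fin N) (Fin N) ℂ)) := by
    intro i
    conv_lhs => rw [← hdual' (E i)]
    push_cast
    rfl
  have hi : ∀ i : ι, (((v i : Matrix (Fin N) (Fin N) ℂ)) ⊗ₖ ((C i : Matrix (Fin N) (Fin N) ℂ))) * SM A
      - SM A * (((v i : Matrix (Fin N) (Fin N) ℂ)) ⊗ₖ ((C i : Matrix (Fin N) (Fin N) ℂ)))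
      = (((D i : Matrix (Fin N) (Fin N) ℂ)) ⊗ₖ ((C i : Matrix (Fin N) (Fin N) ℂ)))
        + (((v i : Matrix (Fin N) (Fin N) ℂ)) ⊗ₖ ((E i : Matrix (Fin N) (Fin N) ℂ))) := by
    intro i
    simp only [SM, mul_add, add_mul, ← Matrix.mul_kronecker_mul, Matrix.mul_one, Matrix.one_mul,
      hD, hE]
    rw [sub_kron, kron_sub]
    abel
  have key : (∑ i, (((v i : Matrix (Fin N) (Fin N) ℂ)) ⊗ₖ ((C i : Matrix (Fin N) (Fin N) ℂ)))) * SM A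
      - SM A * (∑ i, (((v i : Matrix (Fin N) (Fin N) ℂ)) ⊗ₖ ((C i : Matrix (Fin N) (Fin N) ℂ)))) = 0 := by
    rw [Finset.sum_mul, Finset.mul_sum, ← Finset.sum_sub_distrib]
    calc (∑ i, ((((v i : Matrix (Fin N) (Fin N) ℂ)) ⊗ₖ ((C i : Matrix (Fin N) (Fin N) ℂ))) * SM A
        - SM A * (((v i : Matrix (Fin N) (Fin N) ℂ)) ⊗ₖ ((C i : Matrix (Fin N) (Fin N) ℂ)))))
        = ∑ i, ((((D i : Matrix (Fin N) (Fin N) ℂ)) ⊗ₖ ((C i : Matrix (Fin N) (Fin N) ℂ)))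
          + (((v i : Matrix (Fin N) (Fin N) ℂ)) ⊗ₖ ((E i : Matrix (Fin N) (Fin N) ℂ)))) := by
          exact Finset.sum_congr rfl fun i _ => hi i
      _ = ∑ i, ∑ j, (bf p (D i) (C j) • (((v j : Matrix (Fin N) (Fin N) ℂ)) ⊗ₖ ((C i : Matrix (Fin N) (Fin N) ℂ))))
          + ∑ i, ∑ j, (bf p (E i) (v j) • (((v i : Matrix (Fin N) (Fin N) ℂ)) ⊗ₖ ((C j : Matrix (Fin N) (Fin N) ℂ)))) := by
          rw [Finset.sum_add_distrib]
          congr 1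
          · exact Finset.sum_congr rfl fun i _ => by
              rw [hDc i, sum_kron]
              exact Finset.sum_congr rfl fun j _ => by rw [Matrix.smul_kronecker]
          · exact Finset.sum_congr rfl fun i _ => by
              rw [hEc i, kron_sum]
              exact Finset.sum_congr rfl fun j _ => by rw [Matrix.kronecker_smul]
      _ = 0 := by
          rw [Finset.sum_comm, ← Finset.sum_add_distrib]
          refine Finset.sum_eq_zero fun x _ => ?_
          rw [← Finset.sum_add_distrib]
          refine Finset.sum_eq_zero fun y _ => ?_
          rw [← add_smul, hcoef y x, zero_smul]
  exact sub_eq_zero.mp key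

/-- A Lie subalgebra `k ⊆ su(N)` equals `su(N)` iff the commutant of
`{A ⊗ 1 + 1 ⊗ A : A ∈ k}` in `M_{N²}(ℂ)` has dimension exactly `2`. -/
theorem full_controllability_iff_commutant_dim_two (N : ℕ) (hN : 2 ≤ N)
    (k : LieSubalgebra ℝ (Matrix (Fin N) (Fin N) ℂ))
    (hsu : ∀ A ∈ k, Aᴴ = -A ∧ A.trace = 0) :
    (k : Set (Matrix (Fin N) (Fin N) ℂ)) =
        {A : Matrix (Fin N) (Fin N) ℂ | Aᴴ = -A ∧ A.trace = 0} ↔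
      Module.finrank ℂ ↥(tensorCommutant N (k : Set (Matrix (Fin N) (Fin N) ℂ))) = 2 := by
  constructor
  · -- forward direction
    intro h
    have heq : tensorCommutant N (k : Set (Matrix (Fin N) (Fin N) ℂ))
        = Submodule.span ℂ {(1 : Matrix (Fin N × Fin N) (Fin N × Fin N) ℂ), Kmat N} := by
      refine le_antisymm ?_ (span_le_tc _)
      intro g hg
      have hg' : ∀ A : Matrix (Fin N) (Fin N) ℂ, Commute g (SM A) := by
        apply comm_all hN
        intro A hA
        have hmem : A ∈ (k : Set (Matrix (Fin N) (Fin N) ℂ)) := by rw [h]; exact hA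
        exact hg A hmem
      rw [tc_structure hN g hg']
      exact Submodule.mem_span_pair.mpr ⟨_, _, rfl⟩
    rw [heq]
    exact finrank_span_one_Kmat hN
  · -- backward direction
    intro hdim
    set p : Submodule ℝ (Matrix (Fin N) (Fin N) ℂ) :=
      (k : Submodule ℝ (Matrix (Fin N) (Fin N) ℂ)) with hpdef
    have hmemp : ∀ {A : Matrix (Fin N) (Fin N) ℂ}, A ∈ p ↔ A ∈ k := by
      intro A; exact Iff.rfl
    have hskew : ∀ A ∈ p, Aᴴ = -A := fun A hA => (hsu A (hmemp.mp hA)).1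
    have hnd := bf_nondeg p hskew
    have hp : ∀ {X Y : Matrix (Fin N) (Fin N) ℂ}, X ∈ p → Y ∈ p → X * Y - Y * X ∈ p := by
      intro X Y hX hY
      have := k.lie_mem (hmemp.mp hX) (hmemp.mp hY)
      rw [Ring.lie_def] at this
      exact hmemp.mpr this
    by_cases hbot : ∃ X ∈ k, X ≠ (0 : Matrix (Fin N) (Fin N) ℂ)
    · obtain ⟨X₀, hX₀k, hX₀⟩ := hbot
      have hX₀p : X₀ ∈ p := hmemp.mpr hX₀k
      have hspan : Submodule.span ℂ {(1 : Matrix (Fin N × Fin N) (Fin N × Fin N) ℂ), Kmat N}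
          = tensorCommutant N (k : Set (Matrix (Fin N) (Fin N) ℂ)) := by
        refine Submodule.eq_of_le_of_finrank_le (span_le_tc _) ?_
        rw [hdim, finrank_span_one_Kmat hN]
      set v : Module.Basis (Fin (Module.finrank ℝ ↥p)) ℝ ↥p := Module.finBasis ℝ ↥p with hv
      set C : Module.Basis (Fin (Module.finrank ℝ ↥p)) ℝ ↥p := (bf p).dualBasis hnd v with hC
      have hdual' : ∀ X : ↥p, (∑ i, bf p X (v i) • C i) = X := by
        intro X
        have h1 : ∀ i, C.repr X i = bf p X (v i) := fun i =>
          LinearMap.BilinForm.dualBasis_repr_apply (B := bf p) hnd v X i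
        calc (∑ i, bf p X (v i) • C i) = ∑ i, C.repr X i • C i := by
              refine Finset.sum_congr rfl fun i _ => by rw [h1 i]
          _ = X := C.sum_repr X
      have hvC : (bf p).dualBasis hnd C = v := by
        rw [hC]
        exact LinearMap.BilinForm.dualBasis_dualBasis (B := bf p) hnd (bf_symm p) v
      have hdual : ∀ X : ↥p, (∑ i, bf p X (C i) • v i) = X := by
        intro X
        have h1 : ∀ i, v.repr X i = bf p X (C i) := by
          intro i
          conv_lhs => rw [← hvC]
          exact LinearMap.BilinForm.dualBasis_repr_apply (B := bf p) hnd C X i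
        calc (∑ i, bf p X (C i) • v i) = ∑ i, v.repr X i • v i := by
              refine Finset.sum_congr rfl fun i _ => by rw [h1 i]
          _ = X := v.sum_repr X
      have hT : (∑ i, (((v i : Matrix (Fin N) (Fin N) ℂ)) ⊗ₖ ((C i : Matrix (Fin N) (Fin N) ℂ))))
          ∈ tensorCommutant N (k : Set (Matrix (Fin N) (Fin N) ℂ)) := by
        intro A hA
        exact (T_mem_tc p hp v C hdual A (hmemp.mpr hA) hdual').eq
      rw [← hspan] at hT
      obtain ⟨a, b, hab⟩ := Submodule.mem_span_pair.mp hT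
      have hkey : ∀ X : Matrix (Fin N) (Fin N) ℂ,
          (∑ i, (((C i : Matrix (Fin N) (Fin N) ℂ)) * X).trace • ((v i : Matrix (Fin N) (Fin N) ℂ)))
          = (a * X.trace) • (1 : Matrix (Fin N) (Fin N) ℂ) + b • X := by
        intro X
        have h1 := congrArg (phi X) hab
        simp only [map_add, _root_.map_smul, map_sum, phi_one, phi_K hN, phi_kron] at h1
        rw [← h1, smul_smul]
      -- b = -1
      have hreal : ∀ (i : Fin (Module.finrank ℝ ↥p)) (X : Matrix (Fin N) (Fin N) ℂ),
          Xᴴ = -X →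
          (((C i : Matrix (Fin N) (Fin N) ℂ)) * X).trace
            = (((((C i : Matrix (Fin N) (Fin N) ℂ)) * X).trace.re : ℝ) : ℂ) := by
        intro i X hX
        exact real_trace_of_skew _ X (hskew _ (C i).2) hX
      have hcoef : ∀ (i : Fin (Module.finrank ℝ ↥p)) (X : ↥p),
          (((C i : Matrix (Fin N) (Fin N) ℂ)) * (X : Matrix (Fin N) (Fin N) ℂ)).trace.re
            = - bf p X (C i) := by
        intro i X
        rw [bf_apply, Matrix.trace_mul_comm]
        ring
      have hsum_eq : ∀ X : ↥p,
          (∑ i, (((C i : Matrix (Fin N) (Fin N) ℂ)) * (X : Matrix (Fin N) (Fin N) ℂ)).trace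
            • ((v i : Matrix (Fin N) (Fin N) ℂ)))
          = -(X : Matrix (Fin N) (Fin N) ℂ) := by
        intro X
        have hXs : (X : Matrix (Fin N) (Fin N) ℂ)ᴴ = -(X : Matrix (Fin N) (Fin N) ℂ) :=
          hskew _ X.2
        have hexp := congrArg (Submodule.subtype p) (hdual X)
        simp only [map_sum, LinearMap.map_smul, Submodule.coe_subtype] at hexp
        calc (∑ i, (((C i : Matrix (Fin N) (Fin N) ℂ)) * (X : Matrix (Fin N) (Fin N) ℂ)).trace
              • ((v i : Matrix (Fin N) (Fin N) ℂ)))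
            = ∑ i, (- bf p X (C i)) • ((v i : Matrix (Fin N) (Fin N) ℂ)) := by
              refine Finset.sum_congr rfl fun i _ => ?_
              rw [hreal i _ hXs, hcoef i X]
              rw [show (((- bf p X (C i) : ℝ)) : ℂ) = algebraMap ℝ ℂ (- bf p X (C i)) from rfl,
                algebraMap_smul]
          _ = -(X : Matrix (Fin N) (Fin N) ℂ) := by
              simp only [neg_smul]
              rw [Finset.sum_neg_distrib, hexp]
      have hb : b = -1 := by
        have h0 := hkey X₀
        rw [(hsu X₀ hX₀k).2, mul_zero, zero_smul, zero_add] at h0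
        have h1 := hsum_eq ⟨X₀, hX₀p⟩
        have h2 : b • X₀ = -X₀ := by rw [← h0]; exact h1
        have h3 : (b + 1) • X₀ = 0 := by
          rw [add_smul, one_smul, h2]
          simp
        rcases smul_eq_zero.mp h3 with hcase | hcase
        · linear_combination hcase
        · exact absurd hcase hX₀
      ext A
      simp only [Set.mem_setOf_eq, SetLike.mem_coe]
      constructor
      · intro hA; exact hsu A hA
      · rintro ⟨hAs, hAtr⟩
        have h0 := hkey A
        rw [hAtr, mul_zero, zero_smul, zero_add, hb, neg_one_smul] at h0
        have hmem2 : (∑ i, (-((((C i : Matrix (Fin N) (Fin N) ℂ)) * A).trace.re) : ℝ)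
            • ((v i : Matrix (Fin N) (Fin N) ℂ))) ∈ p :=
          p.sum_mem fun i _ => p.smul_mem _ (v i).2
        have heqA : (∑ i, (-((((C i : Matrix (Fin N) (Fin N) ℂ)) * A).trace.re) : ℝ)
            • ((v i : Matrix (Fin N) (Fin N) ℂ))) = A := by
          calc (∑ i, (-((((C i : Matrix (Fin N) (Fin N) ℂ)) * A).trace.re) : ℝ)
              • ((v i : Matrix (Fin N) (Fin N) ℂ)))
              = ∑ i, (-((((C i : Matrix (Fin N) (Fin N) ℂ)) * A).trace))
                • ((v i : Matrix (Fin N) (Fin N) ℂ)) := by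
                refine Finset.sum_congr rfl fun i _ => ?_
                rw [show ((-((((C i : Matrix (Fin N) (Fin N) ℂ)) * A).trace.re) : ℝ)
                    • ((v i : Matrix (Fin N) (Fin N) ℂ)))
                  = (algebraMap ℝ ℂ (-((((C i : Matrix (Fin N) (Fin N) ℂ)) * A).trace.re)))
                    • ((v i : Matrix (Fin N) (Fin N) ℂ)) from (algebraMap_smul ℂ _ _).symm]
                congr 1
                rw [hreal i A hAs]
                simp
            _ = -∑ i, ((((C i : Matrix (Fin N) (Fin N) ℂ)) * A).trace)
                • ((v i : Matrix (Fin N) (Fin N) ℂ)) := by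
                simp only [neg_smul]
                rw [Finset.sum_neg_distrib]
            _ = A := by rw [h0]; simp
        rw [← heqA]
        exact hmemp.mp hmem2
    · -- k is trivial : commutant is everything
      push_neg at hbot
      have htop : tensorCommutant N (k : Set (Matrix (Fin N) (Fin N) ℂ)) = ⊤ := by
        rw [eq_top_iff]
        intro g _ A hA
        rw [hbot A hA]
        simp [Matrix.zero_kronecker, Matrix.kronecker_zero]
      rw [htop, finrank_top, Module.finrank_matrix] at hdim
      simp only [Fintype.card_prod, Fintype.card_fin, Module.finrank_self, mul_one] at hdim
      have h4 : 4 ≤ N * N := Nat.mul_le_mul hN hN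
      have h16 : 16 ≤ N * N * (N * N) := by
        calc 16 = 4 * 4 := rfl
        _ ≤ N * N * (N * N) := Nat.mul_le_mul h4 h4
      omega
end
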